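/- For every integer R with 1 ≤ R ≤ n there exists a subset X ⊆ S with |X| = R such that for every vote s ∈ S \ X, ina(X) − ina(X ∪ {s}) ≤ OPT / R; such a set X is called (OPT/R)-stable. -/

import Mathlib

open Finset

/-- Number of ones in a binary string. -/
def onesCount {m : ℕ} (x : Fin m → Bool) : ℕ :=
  (Finset.univ.filter fun j => x j = true).card

/-- The maximal Hamming distance from `x` to a vote. -/
def maxDist {n m : ℕ} (s : Fin n → Fin m → Bool) (x : Fin m → Bool) : ℕ :=
  Finset.univ.sup fun i => hammingDist x (s i)

/-- The string `t(Y)`: the optimal solution overwritten at positions where all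
strings of `Y` agree. -/
def tfun {m : ℕ} (sOPT : Fin m → Bool) (Y : Finset (Fin m → Bool)) : Fin m → Bool :=
  fun j =>
    if ∀ y ∈ Y, y j = false then false
    else if ∀ y ∈ Y, y j = true then true
    else sOPT j

/-- The inaccuracy of a subset of votes. -/
def ina {m : ℕ} (sOPT : Fin m → Bool) (Y : Finset (Fin m → Bool)) : ℕ :=
  hammingDist (tfun sOPT Y) sOPT

def Iset {m : ℕ} (sOPT : Fin m → Bool) (Y : Finset (Fin m → Bool)) : Finset (Fin m) :=
  Finset.univ.filter fun j => ∀ y ∈ Y, y j ≠ sOPT j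

lemma ina_eq_Iset {m : ℕ} (sOPT : Fin m → Bool) (Y : Finset (Fin m → Bool))
    (hY : Y.Nonempty) : ina sOPT Y = (Iset sOPT Y).card := by
  obtain ⟨y0, hy0⟩ := hY
  unfold ina Iset hammingDist
  congr 1
  ext j
  simp only [Finset.mem_filter, Finset.mem_univ, true_and]
  simp only [tfun]
  constructor
  · intro h y hy
    split_ifs at h with h1 h2
    · cases hs : sOPT j
      · simp [hs] at h
      · simp [h1 y hy, hs]
    · cases hs : sOPT j
      · simp [h2 y hy, hs]
      · simp [hs] at h
    · exact absurd rfl h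
  · intro h
    have := h y0 hy0
    cases hs : sOPT j
    · rw [hs] at this
      have h1 : ¬ ∀ y ∈ Y, y j = false := fun hh => this (hh y0 hy0)
      have h2 : ∀ y ∈ Y, y j = true := by
        intro y hy
        have := h y hy; rw [hs] at this
        simpa using this
      rw [if_neg h1, if_pos h2]
      simp
    · have h1 : ∀ y ∈ Y, y j = false := by
        intro y hy
        have := h y hy; rw [hs] at this
        simpa using this
      rw [if_pos h1]
      simp

lemma Iset_union {m : ℕ} (sOPT : Fin m → Bool) (Y : Finset (Fin m → Bool))
    (v : Fin m → Bool) : Iset sOPT (Y ∪ {v}) = Iset sOPT Y ∩ Iset sOPT {v} := by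
  ext j
  simp only [Iset, Finset.mem_filter, Finset.mem_inter, Finset.mem_univ, true_and,
    Finset.mem_union, Finset.mem_singleton]
  constructor
  · intro h
    exact ⟨fun y hy => h y (Or.inl hy), fun y hy => h y (Or.inr hy)⟩
  · rintro ⟨h1, h2⟩ y (hy | hy)
    · exact h1 y hy
    · exact h2 y hy

lemma Iset_anti {m : ℕ} (sOPT : Fin m → Bool) {Y X : Finset (Fin m → Bool)}
    (h : Y ⊆ X) : Iset sOPT X ⊆ Iset sOPT Y := by
  intro j hj
  simp only [Iset, Finset.mem_filter, Finset.mem_univ, true_and] at hj ⊢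
  exact fun y hy => hj y (h hy)

lemma Iset_decomp {m : ℕ} (sOPT : Fin m → Bool) (Y : Finset (Fin m → Bool))
    (v : Fin m → Bool) :
    (Iset sOPT (Y ∪ {v})).card + (Iset sOPT Y \ Iset sOPT {v}).card
      = (Iset sOPT Y).card := by
  rw [Iset_union]
  exact Finset.card_inter_add_card_sdiff _ _

lemma Iset_singleton_card {m : ℕ} (sOPT v : Fin m → Bool) :
    (Iset sOPT {v}).card = hammingDist v sOPT := by
  unfold Iset hammingDist
  congr 1
  ext j
  simp

/-- For every integer `R` with `1 ≤ R ≤ n` there exists a subset `X ⊆ S` with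
`|X| = R` such that for every vote `v ∈ S \ X`,
`ina(X) − ina(X ∪ {v}) ≤ OPT / R`, i.e. `X` is `(OPT/R)`-stable. -/
theorem exists_stable_subset {n m k : ℕ} (hkm : k ≤ m) (hn : 0 < n)
    (s : Fin n → Fin m → Bool) (hinj : Function.Injective s)
    (OPT : ℕ) (sOPT : Fin m → Bool)
    (hk : onesCount sOPT = k)
    (hOPT : maxDist s sOPT = OPT)
    (hmin : ∀ x : Fin m → Bool, onesCount x = k → OPT ≤ maxDist s x)
    (R : ℕ) (hR1 : 1 ≤ R) (hRn : R ≤ n) :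
    ∃ X : Finset (Fin m → Bool), X ⊆ Finset.image s Finset.univ ∧ X.card = R ∧
      ∀ v ∈ Finset.image s Finset.univ \ X,
        (ina sOPT X : ℝ) - ina sOPT (X ∪ {v}) ≤ (OPT : ℝ) / R := by
  set S : Finset (Fin m → Bool) := Finset.image s Finset.univ with hS
  have hScard : S.card = n := by
    rw [hS, Finset.card_image_of_injective _ hinj, Finset.card_univ, Fintype.card_fin]
  have hsingle : ∀ y ∈ S, (Iset sOPT {y}).card ≤ OPT := by
    intro y hy
    obtain ⟨i, _, rfl⟩ := Finset.mem_image.mp hy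
    rw [Iset_singleton_card, hammingDist_comm, ← hOPT]
    unfold maxDist
    exact Finset.le_sup (f := fun i => hammingDist sOPT (s i)) (Finset.mem_univ i)
  have hdrople : ∀ (Y : Finset (Fin m → Bool)) (v : Fin m → Bool), Y.Nonempty →
      (Iset sOPT Y \ Iset sOPT {v}).card ≤ (Iset sOPT Y).card :=
    fun Y v _ => Finset.card_le_card Finset.sdiff_subset
  by_contra hcon
  push_neg at hcon
  have key : ∀ Y : Finset (Fin m → Bool), Y ⊆ S → Y.Nonempty → Y.card ≤ R →
      ∃ v ∈ S \ Y, OPT + 1 ≤ R * (Iset sOPT Y \ Iset sOPT {v}).card := by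
    intro Y hYS hYne hYcard
    obtain ⟨X, hYX, hXS, hXcard⟩ := Finset.exists_subsuperset_card_eq hYS hYcard
      (hRn.trans hScard.ge)
    obtain ⟨v, hv, hvlt⟩ := hcon X hXS hXcard
    have hXne : X.Nonempty := Finset.card_pos.mp (hXcard ▸ hR1)
    have hvY : v ∈ S \ Y := by
      rw [Finset.mem_sdiff] at hv ⊢
      exact ⟨hv.1, fun h => hv.2 (hYX h)⟩
    refine ⟨v, hvY, ?_⟩
    have hdX := Iset_decomp sOPT X v
    have hinaX : ina sOPT X = (Iset sOPT X).card := ina_eq_Iset sOPT X hXne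
    have hinaXv : ina sOPT (X ∪ {v}) = (Iset sOPT (X ∪ {v})).card :=
      ina_eq_Iset sOPT (X ∪ {v}) (hXne.mono Finset.subset_union_left)
    set dX : ℕ := (Iset sOPT X \ Iset sOPT {v}).card with hdXdef
    have hreal : (OPT : ℝ) / R < dX := by
      have heq : (ina sOPT X : ℝ) - ina sOPT (X ∪ {v}) = (dX : ℝ) := by
        rw [hinaX, hinaXv, ← hdX]
        push_cast
        ring
      linarith [hvlt, heq.le, heq.ge]
    have hRpos : (0:ℝ) < R := by positivity
    have hnat : OPT + 1 ≤ R * dX := by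
      rw [div_lt_iff₀ hRpos] at hreal
      have : (OPT : ℝ) < ((R * dX : ℕ) : ℝ) := by push_cast; linarith
      exact Nat.lt_iff_add_one_le.mp (by exact_mod_cast this)
    have hmono : dX ≤ (Iset sOPT Y \ Iset sOPT {v}).card :=
      Finset.card_le_card (Finset.sdiff_subset_sdiff (Iset_anti sOPT hYX) le_rfl)
    calc OPT + 1 ≤ R * dX := hnat
      _ ≤ R * (Iset sOPT Y \ Iset sOPT {v}).card := Nat.mul_le_mul_left R hmono
  have chain : ∀ r : ℕ, 1 ≤ r → r ≤ R → ∃ Y : Finset (Fin m → Bool),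
      Y ⊆ S ∧ Y.card = r ∧
        R * (Iset sOPT Y).card + r * (OPT + 1) ≤ R * OPT + (OPT + 1) := by
    intro r hr1
    induction r, hr1 using Nat.le_induction with
    | base =>
      intro _
      refine ⟨{s ⟨0, hn⟩}, ?_, Finset.card_singleton _, ?_⟩
      · intro x hx
        rw [Finset.mem_singleton] at hx
        rw [hx, hS]
        exact Finset.mem_image_of_mem s (Finset.mem_univ _)
      · have := Nat.mul_le_mul_left R
          (hsingle (s ⟨0, hn⟩) (Finset.mem_image_of_mem s (Finset.mem_univ (⟨0, hn⟩ : Fin n))))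
        omega
    | succ r hr ih =>
      intro hrR
      obtain ⟨Y, hYS, hYcard, hYineq⟩ := ih (Nat.le_of_succ_le hrR)
      have hYne : Y.Nonempty := Finset.card_pos.mp (hYcard ▸ hr)
      obtain ⟨v, hv, hdrop⟩ := key Y hYS hYne (hYcard ▸ Nat.le_of_succ_le hrR)
      rw [Finset.mem_sdiff] at hv
      refine ⟨Y ∪ {v}, ?_, ?_, ?_⟩
      · exact Finset.union_subset hYS (Finset.singleton_subset_iff.mpr hv.1)
      · rw [Finset.union_comm, ← Finset.insert_eq, Finset.card_insert_of_notMem hv.2,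
          hYcard]
      · have hd := Iset_decomp sOPT Y v
        have h1 : R * (Iset sOPT Y).card
            = R * (Iset sOPT (Y ∪ {v})).card
              + R * (Iset sOPT Y \ Iset sOPT {v}).card := by
          rw [← Nat.mul_add, hd]
        have h2 : (r + 1) * (OPT + 1) = r * (OPT + 1) + (OPT + 1) := by ring
        omega
  obtain ⟨Y, hYS, hYcard, hYineq⟩ := chain R hR1 le_rfl
  have hYne : Y.Nonempty := Finset.card_pos.mp (hYcard ▸ hR1)
  obtain ⟨v, hv, hdrop⟩ := key Y hYS hYne hYcard.le
  have hdle : R * (Iset sOPT Y \ Iset sOPT {v}).card ≤ R * (Iset sOPT Y).card :=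
    Nat.mul_le_mul_left R (hdrople Y v hYne)
  have hfin : OPT + 1 ≤ R * (Iset sOPT Y).card := hdrop.trans hdle
  have hR : R * (OPT + 1) = R * OPT + R := by ring
  omega
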